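/- Fix integers n, d ≥ 1, reals a < b, and block matrices B = [B_{i,j}], C = [C_{i,j}] ∈ ℝ^{nd×nd} with n×n blocks indexed by i, j ∈ {0,…,d−1}. Define Q(z) ∈ ℝ^{nd×nd} blockwise by Q(z)_{i,j} = (z^{j−i}/(j−i)!) I_n for j ≥ i and 0 otherwise, and set K := B + C·Q(b−a). Assume K is invertible. If u : [a,b] → ℝⁿ is d times continuously differentiable on [a,b], satisfies u^{(d)}(s) = 0 for all s ∈ [a,b], and satisfies the boundary conditions Σ_{j=0}^{d−1} (B_{i,j} u^{(j)}(a) + C_{i,j} u^{(j)}(b)) = 0 for every i ∈ {0,…,d−1}, then u(s) = 0 for all s ∈ [a,b]. -/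

import Mathlib

open scoped Matrix

/-- The block-matrix `Q(z)`, with `n×n` blocks `Q(z)_{i,j} = (z^{j−i}/(j−i)!) Iₙ` for `j ≥ i`
and `0` otherwise; block indices are encoded as the first component of `Fin d × Fin n`. -/
noncomputable def Qmat (n d : ℕ) (z : ℝ) : Matrix (Fin d × Fin n) (Fin d × Fin n) ℝ :=
  fun ip jq =>
    if ip.1 ≤ jq.1 ∧ ip.2 = jq.2 then
      z ^ ((jq.1 : ℕ) - (ip.1 : ℕ)) / Nat.factorial ((jq.1 : ℕ) - (ip.1 : ℕ))
    else 0

/-- uniqueness part of Corollary 2 of the paper: if `K = B + C Q(b−a)` is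
invertible, then any `d` times continuously differentiable `u` with `u⁽ᵈ⁾ = 0` on `[a,b]`
satisfying the boundary conditions `Σⱼ (B_{i,j} u⁽ʲ⁾(a) + C_{i,j} u⁽ʲ⁾(b)) = 0` vanishes
identically on `[a,b]`. -/
private lemma sum_ite_range_shift {M : Type*} [AddCommMonoid M] (d k : ℕ) (hk : k ≤ d)
    (h : ℕ → M) :
    ∑ j ∈ Finset.range d, (if k ≤ j then h j else 0) = ∑ m ∈ Finset.range (d - k), h (k + m) := by
  conv_lhs => rw [Finset.range_eq_Ico, ← Finset.sum_Ico_consecutive _ (Nat.zero_le k) hk]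
  have h1 : ∑ j ∈ Finset.Ico 0 k, (if k ≤ j then h j else 0) = 0 := by
    apply Finset.sum_eq_zero
    intro j hj
    simp only [Finset.mem_Ico] at hj
    rw [if_neg (by omega)]
  have h2 : ∑ j ∈ Finset.Ico k d, (if k ≤ j then h j else 0) = ∑ j ∈ Finset.Ico k d, h j :=
    Finset.sum_congr rfl fun j hj => by
      simp only [Finset.mem_Ico] at hj; rw [if_pos hj.1]
  rw [h1, h2, zero_add, Finset.sum_Ico_eq_sum_range]

theorem boundary_value_problem_uniqueness
    (n d : ℕ) (hn : 1 ≤ n) (hd : 1 ≤ d) (a b : ℝ) (hab : a < b)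
    (B C : Matrix (Fin d × Fin n) (Fin d × Fin n) ℝ)
    (K : Matrix (Fin d × Fin n) (Fin d × Fin n) ℝ)
    (hK : K = B + C * Qmat n d (b - a)) (hKinv : IsUnit K.det)
    (u : ℝ → Fin n → ℝ) (hu : ContDiffOn ℝ d u (Set.Icc a b))
    (hud : ∀ s ∈ Set.Icc a b, iteratedDerivWithin d u (Set.Icc a b) s = 0)
    (hbc : ∀ i : Fin d, ∀ p : Fin n,
      ∑ j : Fin d, ∑ q : Fin n,
        (B (i, p) (j, q) * iteratedDerivWithin (j : ℕ) u (Set.Icc a b) a q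
          + C (i, p) (j, q) * iteratedDerivWithin (j : ℕ) u (Set.Icc a b) b q) = 0) :
    ∀ s ∈ Set.Icc a b, u s = 0 := by
  set I : Set ℝ := Set.Icc a b with hIdef
  have hI : UniqueDiffOn ℝ I := uniqueDiffOn_Icc hab
  set g : ℕ → ℝ → (Fin n → ℝ) := fun k => iteratedDerivWithin k u I with hg
  have haI : a ∈ I := Set.left_mem_Icc.2 hab.le
  have hbI : b ∈ I := Set.right_mem_Icc.2 hab.le
  -- derivative fact
  have hderiv : ∀ j, j < d → ∀ s ∈ I, HasDerivWithinAt (g j) (g (j + 1) s) I s := by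
    intro j hj s hs
    have hdiff : DifferentiableWithinAt ℝ (g j) I s :=
      (hu.differentiableOn_iteratedDerivWithin (by exact_mod_cast hj) hI) s hs
    have h2 := hdiff.hasDerivWithinAt
    have h3 : g (j + 1) s = derivWithin (g j) I s := by
      simp only [hg]
      rw [iteratedDerivWithin_succ]
    rwa [← h3] at h2
  -- key polynomial identity
  have key : ∀ t, t ≤ d → ∀ s ∈ I, g (d - t) s =
      ∑ k ∈ Finset.range t, ((s - a) ^ k / (k.factorial : ℝ)) • g (d - t + k) a := by
    intro t
    induction t with
    | zero =>
      intro _ s hs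
      simp only [Nat.sub_zero, Finset.range_zero, Finset.sum_empty]
      exact hud s hs
    | succ t ih =>
      intro ht s hs
      have ht' : t ≤ d := Nat.le_of_succ_le ht
      set j := d - (t + 1) with hjdef
      have hjd : j < d := by omega
      have hj1 : j + 1 = d - t := by omega
      set P : ℝ → Fin n → ℝ :=
        fun s => ∑ k ∈ Finset.range (t + 1), ((s - a) ^ k / (k.factorial : ℝ)) • g (j + k) a
        with hP
      -- derivative of P
      have hPderiv : ∀ x ∈ I, HasDerivWithinAt P (g (j + 1) x) I x := by
        intro x hx
        have h1 : HasDerivWithinAt P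
            (∑ k ∈ Finset.range (t + 1),
              (((k : ℝ) * (x - a) ^ (k - 1) / (k.factorial : ℝ)) • g (j + k) a)) I x := by
          apply HasDerivWithinAt.fun_sum
          intro k _
          have h2 : HasDerivWithinAt (fun s : ℝ => (s - a) ^ k / (k.factorial : ℝ))
              ((k : ℝ) * (x - a) ^ (k - 1) * 1 / (k.factorial : ℝ)) I x :=
            (((hasDerivWithinAt_id x I).sub_const a).pow k).div_const _
          simpa using h2.smul_const (g (j + k) a)
        have h3 : (∑ k ∈ Finset.range (t + 1),
              (((k : ℝ) * (x - a) ^ (k - 1) / (k.factorial : ℝ)) • g (j + k) a))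
            = g (j + 1) x := by
          rw [Finset.sum_range_succ']
          simp only [Nat.cast_zero, zero_mul, zero_div, zero_smul, add_zero]
          have h4 : ∀ k : ℕ, ((k : ℝ) + 1) * (x - a) ^ k / ((k + 1).factorial : ℝ)
              = (x - a) ^ k / (k.factorial : ℝ) := by
            intro k
            rw [Nat.factorial_succ]
            push_cast
            rw [mul_comm ((k : ℝ) + 1) ((k.factorial : ℝ)), mul_comm (((k : ℝ)) + 1)]
            rw [mul_div_mul_right _ _ (by positivity : ((k : ℝ)) + 1 ≠ 0)]
          rw [hj1, ih ht' x hx]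
          apply Finset.sum_congr rfl
          intro k _
          have hjk : j + (k + 1) = d - t + k := by omega
          rw [hjk]
          congr 1
          simpa using h4 k
        rwa [h3] at h1
      -- F := g j - P is constant
      have hF : ∀ x ∈ I, HasDerivWithinAt (fun s => g j s - P s) 0 I x := by
        intro x hx
        simpa using (hderiv j hjd x hx).fun_sub (hPderiv x hx)
      have hcont : ContinuousOn (fun s => g j s - P s) I := fun x hx =>
        (hF x hx).continuousWithinAt
      have hconst : ∀ x ∈ I, (fun s => g j s - P s) x = (fun s => g j s - P s) a := by
        apply constant_of_has_deriv_right_zero hcont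
        intro x hx
        exact (hF x ⟨hx.1, hx.2.le⟩).mono_of_mem_nhdsWithin (Icc_mem_nhdsGE_of_mem hx)
      have hPa : P a = g j a := by
        show (∑ k ∈ Finset.range (t + 1), ((a - a) ^ k / (k.factorial : ℝ)) • g (j + k) a)
          = g j a
        rw [Finset.sum_eq_single 0]
        · simp
        · intro k _ hk
          simp [zero_pow hk]
        · simp
      have h5' := hconst s hs
      simp only [hPa, sub_self] at h5'
      have h5 : g j s = P s := sub_eq_zero.mp h5'
      simpa only [hP] using h5
  -- vector of derivatives at a
  set x : Fin d × Fin n → ℝ := fun jq => g jq.1 a jq.2 with hx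
  -- Q relation
  have hQ : Qmat n d (b - a) *ᵥ x = fun kr => g kr.1 b kr.2 := by
    funext kr
    obtain ⟨k, r⟩ := kr
    have hkd : (k : ℕ) ≤ d := k.2.le
    have hgb : g (k : ℕ) b = ∑ m ∈ Finset.range (d - k),
        ((b - a) ^ m / (m.factorial : ℝ)) • g ((k : ℕ) + m) a := by
      have hkey := key (d - k) (by omega) b hbI
      rw [show d - (d - (k : ℕ)) = (k : ℕ) by omega] at hkey
      exact hkey
    show ∑ jq : Fin d × Fin n, Qmat n d (b - a) (k, r) jq * x jq = g (k : ℕ) b r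
    rw [Fintype.sum_prod_type]
    have h6 : ∀ j : Fin d, ∑ q : Fin n, Qmat n d (b - a) (k, r) (j, q) * x (j, q)
        = if (k : ℕ) ≤ (j : ℕ) then (b - a) ^ ((j : ℕ) - (k : ℕ)) /
            (((j : ℕ) - (k : ℕ)).factorial : ℝ) * g (j : ℕ) a r else 0 := by
      intro j
      rw [Finset.sum_eq_single r]
      · show (if k ≤ j ∧ r = r then (b - a) ^ ((j : ℕ) - (k : ℕ)) /
            (((j : ℕ) - (k : ℕ)).factorial : ℝ) else 0) * x (j, r) = _
        by_cases hkj : k ≤ j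
        · rw [if_pos ⟨hkj, rfl⟩, if_pos (Fin.le_def.mp hkj)]
        · rw [if_neg (fun h => hkj h.1), if_neg (fun h => hkj (Fin.le_def.mpr h)), zero_mul]
      · intro q _ hq
        show (if k ≤ j ∧ r = q then (b - a) ^ ((j : ℕ) - (k : ℕ)) /
            (((j : ℕ) - (k : ℕ)).factorial : ℝ) else 0) * x (j, q) = 0
        rw [if_neg (fun h => hq h.2.symm), zero_mul]
      · simp
    rw [Finset.sum_congr rfl (fun j _ => h6 j)]
    rw [Fin.sum_univ_eq_sum_range
      (fun j => if (k : ℕ) ≤ j then (b - a) ^ (j - (k : ℕ)) /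
        ((j - (k : ℕ)).factorial : ℝ) * g j a r else 0)]
    rw [sum_ite_range_shift d k hkd, hgb]
    simp only [Finset.sum_apply, Pi.smul_apply, smul_eq_mul]
    apply Finset.sum_congr rfl
    intro m _
    rw [show (k : ℕ) + m - (k : ℕ) = m by omega]
  -- K *ᵥ x = 0
  have hKx : K *ᵥ x = 0 := by
    funext ip
    obtain ⟨i, p⟩ := ip
    rw [hK, Matrix.add_mulVec, ← Matrix.mulVec_mulVec, hQ]
    show (B *ᵥ x) (i, p) + (C *ᵥ fun kr => g kr.1 b kr.2) (i, p) = 0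
    have hbcip := hbc i p
    simp only [Matrix.mulVec, dotProduct, Fintype.sum_prod_type]
    rw [← Finset.sum_add_distrib, ← hbcip]
    apply Finset.sum_congr rfl
    intro jj _
    rw [← Finset.sum_add_distrib]
  -- x = 0
  have hx0 : x = 0 := by
    have h7 : K⁻¹ *ᵥ (K *ᵥ x) = x := by
      rw [Matrix.mulVec_mulVec, Matrix.nonsing_inv_mul _ hKinv, Matrix.one_mulVec]
    rw [hKx, Matrix.mulVec_zero] at h7
    exact h7.symm
  -- conclude
  intro s hs
  have h8 := key d le_rfl s hs
  rw [Nat.sub_self] at h8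
  have h9 : ∀ k ∈ Finset.range d, ((s - a) ^ k / (k.factorial : ℝ)) • g (0 + k) a = 0 := by
    intro k hk
    have hkd : k < d := Finset.mem_range.mp hk
    have hg0 : g (0 + k) a = 0 := by
      funext q
      have := congrFun hx0 (⟨k, hkd⟩, q)
      simpa using this
    rw [hg0, smul_zero]
  rw [Finset.sum_congr rfl h9, Finset.sum_const_zero] at h8
  have hgu : g 0 s = u s := by rw [hg]; simp [iteratedDerivWithin_zero]
  rw [← hgu, h8]
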